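/- In the group Γ dual to B₄, for every element g stabilizing the first level of the 4-ary tree pointwise, each section g|_x (x ∈ {a,b,c,d}) acts on the first level by an even permutation of {a,b,c,d}. -/

import Mathlib

/-- The action of a state of a Mealy automaton on finite words. -/
def mealy {Q X : Type*} (tr : Q → X → Q) (o : Q → X → X) : Q → List X → List X
  | _, [] => []
  | q, x :: w => o q x :: mealy tr o (tr q x) w

theorem mealy_bij {Q X : Type*} (tr : Q → X → Q) (o : Q → X → X)
    (h : ∀ q, Function.Bijective (o q)) (q : Q) : Function.Bijective (mealy tr o q) := by
  classical
  have L : ∀ (w : List X) (q : Q),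
      mealy (fun q x => tr q (Function.surjInv (h q).surjective x))
        (fun q x => Function.surjInv (h q).surjective x) q (mealy tr o q w) = w := by
    intro w
    induction w with
    | nil => intro q; rfl
    | cons x w ih =>
      intro q
      have hx : Function.surjInv (h q).surjective (o q x) = x :=
        Function.leftInverse_surjInv (h q) x
      simp [mealy, hx, ih]
  have R : ∀ (w : List X) (q : Q),
      mealy tr o q
        (mealy (fun q x => tr q (Function.surjInv (h q).surjective x))
          (fun q x => Function.surjInv (h q).surjective x) q w) = w := by
    intro w
    induction w with
    | nil => intro q; rfl
    | cons x w ih =>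
      intro q
      have hx : o q (Function.surjInv (h q).surjective x) = x :=
        Function.rightInverse_surjInv (h q).surjective x
      simp [mealy, hx, ih]
  exact ⟨Function.LeftInverse.injective (fun w => L w q),
    Function.RightInverse.surjective (fun w => R w q)⟩

/-- Transition function of the Bellaterra automaton B4 (states a,b,c,d = 0,1,2,3). -/
def tr4 : Fin 4 → Bool → Fin 4 := fun q x => if x then ![1, 2, 3, 0] q else ![2, 1, 3, 0] q

/-- Output function of B4: a,b act trivially, c,d flip. -/
def out4 : Fin 4 → Bool → Bool := fun q => if q.val ≤ 1 then id else Bool.not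

def act (q : Fin 4) : List Bool → List Bool := mealy tr4 out4 q

noncomputable def actE (q : Fin 4) : Equiv.Perm (List Bool) :=
  Equiv.ofBijective _ (mealy_bij tr4 out4 (by decide) q)

/-- The states of the dual automaton of B4. -/
def dAct (x : Bool) : List (Fin 4) → List (Fin 4) :=
  mealy (fun x q => out4 q x) (fun x q => tr4 q x) x

noncomputable def dActE (x : Bool) : Equiv.Perm (List (Fin 4)) :=
  Equiv.ofBijective _ (mealy_bij (fun x q => out4 q x) (fun x q => tr4 q x) (by decide) x)


/-- The group Γ generated by the dual automaton of B4. -/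
noncomputable def Gamma : Subgroup (Equiv.Perm (List (Fin 4))) :=
  Subgroup.closure {dActE false, dActE true}

/-- auxiliary: sign-like function on letters -/
def ep : Fin 4 → ℤˣ := fun x => if x = 3 then -1 else 1

def ptPerm : Equiv.Perm (Fin 4) := ⟨![1,2,3,0], ![3,0,1,2], by decide, by decide⟩
def pfPerm : Equiv.Perm (Fin 4) := ⟨![2,1,3,0], ![3,1,0,2], by decide, by decide⟩

lemma units_sq (u : ℤˣ) : u * u = 1 := by
  rcases Int.units_eq_one_or u with h | h <;> simp [h]

lemma zmul_aux (a b c d e : ℤˣ) : a * b * c * (d * c * e) = a * d * b * e * (c * c) := by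
  rcases Int.units_eq_one_or a with ha | ha <;> rcases Int.units_eq_one_or b with hb | hb <;>
    rcases Int.units_eq_one_or c with hc | hc <;> rcases Int.units_eq_one_or d with hd | hd <;>
    rcases Int.units_eq_one_or e with he | he <;> subst ha hb hc hd he <;> decide

/-- The invariant preserved by Γ. -/
def Pinv (g : Equiv.Perm (List (Fin 4))) : Prop :=
  ∃ σ : Equiv.Perm (Fin 4), ∃ p : Fin 4 → Equiv.Perm (Fin 4),
    (∀ q : Fin 4, g [q] = [σ q]) ∧ (∀ x q : Fin 4, g [x, q] = [σ x, p x q]) ∧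
    ∀ x : Fin 4, Equiv.Perm.sign (p x) = Equiv.Perm.sign σ * ep (σ x) * ep x

lemma Pinv_one : Pinv 1 := by
  refine ⟨1, fun _ => 1, by simp, by simp, ?_⟩
  intro x
  simp [units_sq]

lemma Pinv_gen (b : Bool) : Pinv (dActE b) := by
  cases b
  · refine ⟨pfPerm, ![pfPerm, pfPerm, ptPerm, ptPerm], ?_, ?_, by decide⟩
    · intro q
      show mealy (fun x q => out4 q x) (fun x q => tr4 q x) false [q] = _
      revert q; decide
    · intro x q
      show mealy (fun x q => out4 q x) (fun x q => tr4 q x) false [x, q] = _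
      revert x q; decide
  · refine ⟨ptPerm, ![ptPerm, ptPerm, pfPerm, pfPerm], ?_, ?_, by decide⟩
    · intro q
      show mealy (fun x q => out4 q x) (fun x q => tr4 q x) true [q] = _
      revert q; decide
    · intro x q
      show mealy (fun x q => out4 q x) (fun x q => tr4 q x) true [x, q] = _
      revert x q; decide

lemma Pinv_mul {g h : Equiv.Perm (List (Fin 4))} (hg : Pinv g) (hh : Pinv h) :
    Pinv (g * h) := by
  obtain ⟨σg, pg, hσg, hpg, hsg⟩ := hg
  obtain ⟨σh, ph, hσh, hph, hsh⟩ := hh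
  refine ⟨σg * σh, fun x => pg (σh x) * ph x, ?_, ?_, ?_⟩
  · intro q
    simp [Equiv.Perm.mul_apply, hσh, hσg]
  · intro x q
    simp [Equiv.Perm.mul_apply, hph, hpg]
  · intro x
    rw [map_mul, hsg, hsh, map_mul, zmul_aux, units_sq, mul_one]
    simp [Equiv.Perm.mul_apply]

lemma Pinv_inv {g : Equiv.Perm (List (Fin 4))} (hg : Pinv g) : Pinv g⁻¹ := by
  obtain ⟨σ, p, hσ, hp, hs⟩ := hg
  refine ⟨σ⁻¹, fun x => (p (σ⁻¹ x))⁻¹, ?_, ?_, ?_⟩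
  · intro q
    have h1 : g [σ⁻¹ q] = [q] := by rw [hσ]; simp
    calc g⁻¹ [q] = g⁻¹ (g [σ⁻¹ q]) := by rw [h1]
      _ = [σ⁻¹ q] := by simp
  · intro x q
    have h1 : g [σ⁻¹ x, (p (σ⁻¹ x))⁻¹ q] = [x, q] := by
      rw [hp]; simp
    calc g⁻¹ [x, q] = g⁻¹ (g [σ⁻¹ x, (p (σ⁻¹ x))⁻¹ q]) := by rw [h1]
      _ = [σ⁻¹ x, (p (σ⁻¹ x))⁻¹ q] := by simp
  · intro x
    have hu : ∀ u : ℤˣ, u⁻¹ = u := by decide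
    rw [map_inv, hu, hs, map_inv, hu]
    have h2 : σ (σ⁻¹ x) = x := Equiv.apply_symm_apply σ x
    rw [h2]
    exact mul_right_comm _ _ _

lemma Pinv_of_mem_Gamma {g : Equiv.Perm (List (Fin 4))} (hg : g ∈ Gamma) : Pinv g := by
  refine Subgroup.closure_induction ?_ Pinv_one (fun a b _ _ ha hb => Pinv_mul ha hb)
    (fun a _ ha => Pinv_inv ha) hg
  intro x hx
  rcases hx with h | h
  · rw [h]; exact Pinv_gen false
  · rw [Set.mem_singleton_iff] at h
    rw [h]; exact Pinv_gen true

/-- every element g of Γ stabilizing the first level of the 4-ary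
tree pointwise has all its first-level sections g|_x acting on the first level
by even permutations of {a,b,c,d}. -/
theorem first_level_sections_even :
    ∀ g ∈ Gamma, (∀ q : Fin 4, g [q] = [q]) →
      ∀ x : Fin 4, ∃ p : Equiv.Perm (Fin 4),
        Equiv.Perm.sign p = 1 ∧ ∀ q : Fin 4, g [x, q] = [x, p q] := by
  intro g hg hfix x
  obtain ⟨σ, p, hσ, hp, hs⟩ := Pinv_of_mem_Gamma hg
  have hσ1 : σ = 1 := Equiv.ext fun q => by
    have := (hσ q).symm.trans (hfix q)
    simpa using this
  subst hσ1
  refine ⟨p x, ?_, ?_⟩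
  · rw [hs x]
    simp [units_sq]
  · intro q
    simpa using hp x q
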